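/- Let G be a common function of X and (Y,Z), where (X,Y) is independent of Z. Then H(G|Y)=0, i.e., G is already a common function of X and Y. -/
import Mathlib


open Real Finset

/-- Probability that random variable `X` takes value `a`, under the distribution `p` on `Ω`. -/
noncomputable def pr {Ω α : Type*} [Fintype Ω] [DecidableEq α]
    (p : Ω → ℝ) (X : Ω → α) (a : α) : ℝ :=
  ∑ ω ∈ Finset.univ.filter (fun ω => X ω = a), p ω

/-- Shannon entropy (natural log) of a random variable `X` on the finite space `Ω`. -/
noncomputable def ent {Ω α : Type*} [Fintype Ω] [DecidableEq α]
    (p : Ω → ℝ) (X : Ω → α) : ℝ :=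
  ∑ a ∈ Finset.univ.image X, Real.negMulLog (pr p X a)

/-- Conditional entropy H(X | Y) = H(X,Y) - H(Y). -/
noncomputable def cent {Ω α β : Type*} [Fintype Ω] [DecidableEq α] [DecidableEq β]
    (p : Ω → ℝ) (X : Ω → α) (Y : Ω → β) : ℝ :=
  ent p (fun ω => (X ω, Y ω)) - ent p Y

/-- `p` is a probability distribution on `Ω`. -/
def IsProb {Ω : Type*} [Fintype Ω] (p : Ω → ℝ) : Prop :=
  (∀ ω, 0 ≤ p ω) ∧ ∑ ω, p ω = 1

/-- Independence of two random variables under `p`. -/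
def IndepRV {Ω α β : Type*} [Fintype Ω] [DecidableEq α] [DecidableEq β]
    (p : Ω → ℝ) (X : Ω → α) (Y : Ω → β) : Prop :=
  ∀ a b, pr p (fun ω => (X ω, Y ω)) (a, b) = pr p X a * pr p Y b

/-- `G` is a common function of `U` and `V`: H(G|U) = H(G|V) = 0. -/
def IsCF {Ω α β γ : Type*} [Fintype Ω] [DecidableEq α] [DecidableEq β] [DecidableEq γ]
    (p : Ω → ℝ) (U : Ω → α) (V : Ω → β) (G : Ω → γ) : Prop :=
  cent p G U = 0 ∧ cent p G V = 0

/-- `G` is a maximal common function (Gács–Körner) of `U` and `V`: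
a common function of maximal entropy among all common functions. -/
def IsMCF {Ω α β γ : Type*} [Fintype Ω] [DecidableEq α] [DecidableEq β] [DecidableEq γ]
    (p : Ω → ℝ) (U : Ω → α) (V : Ω → β) (G : Ω → γ) : Prop :=
  IsCF p U V G ∧ ∀ G' : Ω → ℕ, IsCF p U V G' → ent p G' ≤ ent p G

section Aux

variable {Ω α δ : Type*} [Fintype Ω] [DecidableEq α] [DecidableEq δ]

lemma pr_nonneg (p : Ω → ℝ) (hp : ∀ ω, 0 ≤ p ω) (X : Ω → α) (a : α) :
    0 ≤ pr p X a := Finset.sum_nonneg fun ω _ => hp ω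

lemma le_pr (p : Ω → ℝ) (hp : ∀ ω, 0 ≤ p ω) (X : Ω → α) (ω : Ω) :
    p ω ≤ pr p X (X ω) :=
  Finset.single_le_sum (fun ω _ => hp ω) (by simp)

lemma pr_pos_exists (p : Ω → ℝ) (hp : ∀ ω, 0 ≤ p ω) (X : Ω → α) {a : α}
    (h : pr p X a ≠ 0) : ∃ ω, 0 < p ω ∧ X ω = a := by
  obtain ⟨ω, hω, hne⟩ := Finset.exists_ne_zero_of_sum_ne_zero h
  simp only [mem_filter, mem_univ, true_and] at hω
  exact ⟨ω, lt_of_le_of_ne (hp ω) (Ne.symm hne), hω⟩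

lemma pr_fiber (p : Ω → ℝ) (G : Ω → δ) (W : Ω → α) (w : α) :
    ∑ g ∈ Finset.univ.image G, pr p (fun ω => (G ω, W ω)) (g, w) = pr p W w := by
  unfold pr
  rw [← Finset.sum_fiberwise_of_maps_to (g := G) (t := Finset.univ.image G)
    (fun ω _ => Finset.mem_image_of_mem G (mem_univ ω)) p]
  refine Finset.sum_congr rfl fun g _ => ?_
  rw [Finset.filter_filter]
  refine Finset.sum_congr ?_ fun _ _ => rfl
  ext ω
  simp [Prod.ext_iff, and_comm]

lemma ent_subset (p : Ω → ℝ) (V : Ω → α) {s : Finset α}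
    (hs : Finset.univ.image V ⊆ s) :
    ent p V = ∑ a ∈ s, Real.negMulLog (pr p V a) := by
  unfold ent
  refine Finset.sum_subset hs fun a _ ha => ?_
  have : pr p V a = 0 := by
    unfold pr
    apply Finset.sum_eq_zero
    intro ω hω
    simp only [mem_filter, mem_univ, true_and] at hω
    exact absurd (hω ▸ Finset.mem_image_of_mem V (mem_univ ω)) ha
  simp [this]

lemma negMulLog_sum_le {ι : Type*} (t : Finset ι) (f : ι → ℝ)
    (hf : ∀ i ∈ t, 0 ≤ f i) :
    Real.negMulLog (∑ i ∈ t, f i) ≤ ∑ i ∈ t, Real.negMulLog (f i) := by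
  set S := ∑ i ∈ t, f i with hS
  have key : ∀ i ∈ t, f i * (-Real.log S) ≤ Real.negMulLog (f i) := by
    intro i hi
    rcases eq_or_lt_of_le (hf i hi) with h | h
    · simp [← h, Real.negMulLog]
    · have hle : f i ≤ S := Finset.single_le_sum hf hi
      have hlog : Real.log (f i) ≤ Real.log S := Real.log_le_log h hle
      rw [Real.negMulLog]
      nlinarith
  calc Real.negMulLog S = ∑ i ∈ t, f i * (-Real.log S) := by
        rw [← Finset.sum_mul, Real.negMulLog]; ring
    _ ≤ _ := Finset.sum_le_sum key

lemma negMulLog_sum_eq_single {ι : Type*} [DecidableEq ι] (t : Finset ι) (f : ι → ℝ)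
    (hf : ∀ i ∈ t, 0 ≤ f i)
    (heq : ∑ i ∈ t, Real.negMulLog (f i) = Real.negMulLog (∑ i ∈ t, f i))
    {i j : ι} (hi : i ∈ t) (hj : j ∈ t) (hfi : 0 < f i) (hfj : 0 < f j) : i = j := by
  by_contra hne
  set S := ∑ k ∈ t, f k with hS
  have hfjS : f j ≤ ∑ k ∈ t.erase i, f k :=
    Finset.single_le_sum (fun k hk => hf k (Finset.mem_of_mem_erase hk))
      (Finset.mem_erase.2 ⟨Ne.symm hne, hj⟩)
  have hlt : f i < S := by
    have := Finset.add_sum_erase t f hi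
    linarith
  have key : ∀ k ∈ t, f k * (-Real.log S) ≤ Real.negMulLog (f k) := by
    intro k hk
    rcases eq_or_lt_of_le (hf k hk) with h | h
    · simp [← h, Real.negMulLog]
    · have hle : f k ≤ S := Finset.single_le_sum hf hk
      have hlog : Real.log (f k) ≤ Real.log S := Real.log_le_log h hle
      rw [Real.negMulLog]; nlinarith
  have strict : f i * (-Real.log S) < Real.negMulLog (f i) := by
    have hlog : Real.log (f i) < Real.log S := Real.log_lt_log hfi hlt
    rw [Real.negMulLog]; nlinarith
  have : Real.negMulLog S < ∑ k ∈ t, Real.negMulLog (f k) := by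
    calc Real.negMulLog S = ∑ k ∈ t, f k * (-Real.log S) := by
          rw [← Finset.sum_mul, Real.negMulLog]; ring
      _ < _ := Finset.sum_lt_sum key ⟨i, hi, strict⟩
  linarith [heq]

lemma cent_eq_zero_iff (p : Ω → ℝ) (hp : IsProb p) (G : Ω → δ) (W : Ω → α) :
    cent p G W = 0 ↔
      ∀ ω ω', 0 < p ω → 0 < p ω' → W ω = W ω' → G ω = G ω' := by
  obtain ⟨hp0, -⟩ := hp
  have hsub : Finset.univ.image (fun ω => (G ω, W ω)) ⊆
      (Finset.univ.image G) ×ˢ (Finset.univ.image W) := by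
    intro x hx
    simp only [Finset.mem_image, mem_univ, true_and] at hx
    obtain ⟨ω, rfl⟩ := hx
    exact Finset.mem_product.2 ⟨Finset.mem_image_of_mem G (mem_univ ω),
      Finset.mem_image_of_mem W (mem_univ ω)⟩
  have hcent : cent p G W = ∑ w ∈ Finset.univ.image W,
      ((∑ g ∈ Finset.univ.image G,
          Real.negMulLog (pr p (fun ω => (G ω, W ω)) (g, w)))
        - Real.negMulLog (pr p W w)) := by
    unfold cent
    rw [ent_subset p _ hsub, Finset.sum_product_right, ent]
    rw [← Finset.sum_sub_distrib]
  have hnn : ∀ w ∈ Finset.univ.image W,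
      0 ≤ (∑ g ∈ Finset.univ.image G,
          Real.negMulLog (pr p (fun ω => (G ω, W ω)) (g, w)))
        - Real.negMulLog (pr p W w) := by
    intro w _
    have := negMulLog_sum_le (Finset.univ.image G)
      (fun g => pr p (fun ω => (G ω, W ω)) (g, w))
      (fun g _ => pr_nonneg p hp0 _ _)
    rw [pr_fiber p G W w] at this
    linarith
  constructor
  · intro h0 ω ω' hω hω' hWW
    rw [hcent] at h0
    have hall := (Finset.sum_eq_zero_iff_of_nonneg hnn).1 h0
    obtain ⟨w, hw⟩ : ∃ w, W ω = w := ⟨W ω, rfl⟩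
    have hwmem : w ∈ Finset.univ.image W := hw ▸ Finset.mem_image_of_mem W (mem_univ ω)
    have hzero := hall w hwmem
    have heq : ∑ g ∈ Finset.univ.image G,
        Real.negMulLog (pr p (fun ω => (G ω, W ω)) (g, w))
        = Real.negMulLog (∑ g ∈ Finset.univ.image G,
            pr p (fun ω => (G ω, W ω)) (g, w)) := by
      rw [pr_fiber p G W w]; linarith
    have h1 : 0 < pr p (fun ω => (G ω, W ω)) (G ω, w) := by
      have := le_pr p hp0 (fun ω => (G ω, W ω)) ω
      rw [hw] at this
      linarith
    have h2 : 0 < pr p (fun ω => (G ω, W ω)) (G ω', w) := by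
      have := le_pr p hp0 (fun ω => (G ω, W ω)) ω'
      rw [← hWW, hw] at this
      linarith
    exact negMulLog_sum_eq_single (Finset.univ.image G)
      (fun g => pr p (fun ω => (G ω, W ω)) (g, w))
      (fun g _ => pr_nonneg p hp0 _ _) heq
      (Finset.mem_image_of_mem G (mem_univ ω))
      (Finset.mem_image_of_mem G (mem_univ ω')) h1 h2
  · intro hdet
    rw [hcent]
    apply Finset.sum_eq_zero
    intro w hw
    rcases eq_or_lt_of_le (pr_nonneg p hp0 W w) with hPw | hPw
    · have hz : ∀ g ∈ Finset.univ.image G,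
          pr p (fun ω => (G ω, W ω)) (g, w) = 0 := by
        have hsum : ∑ g ∈ Finset.univ.image G,
            pr p (fun ω => (G ω, W ω)) (g, w) = 0 := by
          rw [pr_fiber p G W w, ← hPw]
        exact (Finset.sum_eq_zero_iff_of_nonneg
          (fun g _ => pr_nonneg p hp0 _ _)).1 hsum
      rw [Finset.sum_eq_zero (fun g hg => by rw [hz g hg, Real.negMulLog_zero]),
        ← hPw, Real.negMulLog_zero, sub_zero]
    · obtain ⟨ω1, hω1, hWω1⟩ := pr_pos_exists p hp0 W (ne_of_gt hPw)
      have hz : ∀ g ∈ Finset.univ.image G, g ≠ G ω1 →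
          pr p (fun ω => (G ω, W ω)) (g, w) = 0 := by
        intro g _ hgne
        by_contra hne
        obtain ⟨ω2, hω2, hGW2⟩ := pr_pos_exists p hp0 _ hne
        have hG2 : G ω2 = g := congrArg Prod.fst hGW2
        have hW2 : W ω2 = w := congrArg Prod.snd hGW2
        exact hgne (hG2 ▸ hdet ω2 ω1 hω2 hω1 (hW2.trans hWω1.symm))
      have hmem1 : G ω1 ∈ Finset.univ.image G := Finset.mem_image_of_mem G (mem_univ ω1)
      have hPg : pr p (fun ω => (G ω, W ω)) (G ω1, w) = pr p W w := by
        rw [← pr_fiber p G W w, Finset.sum_eq_single (G ω1) hz (fun h => absurd hmem1 h)]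
      rw [Finset.sum_eq_single (G ω1)
        (fun g hg hgne => by rw [hz g hg hgne, Real.negMulLog_zero])
        (fun h => absurd hmem1 h), hPg, sub_self]

end Aux

/-- If (X,Y) is independent of Z and `G` is a common function of X and
(Y,Z), i.e. H(G|X) = 0 and H(G|Y,Z) = 0, then H(G|Y) = 0, so `G` is already a common
function of X and Y. -/
theorem cf_of_pair_indep {Ω α β γ δ : Type*} [Fintype Ω]
    [DecidableEq α] [DecidableEq β] [DecidableEq γ] [DecidableEq δ]
    (p : Ω → ℝ) (hp : IsProb p)
    (X : Ω → α) (Y : Ω → β) (Z : Ω → γ)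
    (hind : IndepRV p (fun ω => (X ω, Y ω)) Z)
    (G : Ω → δ)
    (hGX : cent p G X = 0)
    (hGYZ : cent p G (fun ω => (Y ω, Z ω)) = 0) :
    cent p G Y = 0 := by
  have hp0 := hp.1
  have detX := (cent_eq_zero_iff p hp G X).1 hGX
  have detYZ := (cent_eq_zero_iff p hp G (fun ω => (Y ω, Z ω))).1 hGYZ
  refine (cent_eq_zero_iff p hp G Y).2 ?_
  intro ω ω' hω hω' hY
  have h1 : 0 < pr p (fun ω => (X ω, Y ω)) (X ω, Y ω) :=
    lt_of_lt_of_le hω (le_pr p hp0 (fun ω => (X ω, Y ω)) ω)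
  have h2 : 0 < pr p Z (Z ω') := lt_of_lt_of_le hω' (le_pr p hp0 Z ω')
  have hpos : pr p (fun ω => ((X ω, Y ω), Z ω)) ((X ω, Y ω), Z ω') ≠ 0 := by
    rw [hind (X ω, Y ω) (Z ω')]
    exact ne_of_gt (mul_pos h1 h2)
  obtain ⟨ω'', hω'', hval⟩ := pr_pos_exists p hp0 _ hpos
  have hXY : (X ω'', Y ω'') = (X ω, Y ω) := congrArg Prod.fst hval
  have hZ : Z ω'' = Z ω' := congrArg Prod.snd hval
  have e1 : G ω'' = G ω := detX ω'' ω hω'' hω (congrArg Prod.fst hXY)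
  have e2 : G ω'' = G ω' := detYZ ω'' ω' hω'' hω'
    (by rw [Prod.mk.injEq]; exact ⟨(congrArg Prod.snd hXY).trans hY, hZ⟩)
  exact e1.symm.trans e2
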